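/- In the setting above, if ⟨·,·⟩₂ − ⟨·,·⟩₁ = −dφ for some linear map φ : L̄ → L̄ (a 1-cochain), then Ψ = Id + ψ∘φ∘λ : B → B is an automorphism of the R_{k+1}-module B satisfying [Ψ(x),Ψ(y)]₂ = Ψ([x,y]₁) for all x,y ∈ B; hence Ψ is a Lie algebra isomorphism from (B,[·,·]₁) to (B,[·,·]₂) inducing the identity on L. -/

import Mathlib

open Pointwise

/-- `Rmod R π m` is the quotient ring `R/π^m R`. -/
abbrev Rmod (R : Type) [CommRing R] (π : R) (m : ℕ) : Type :=
  R ⧸ Ideal.span {π ^ m}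

section Setup

variable (R : Type) [CommRing R] (π : R) (k : ℕ)
variable (B : Type) [AddCommGroup B] [Module (Rmod R π (k + 1)) B]

/-- The image of `π` in `R_{k+1}`. -/
noncomputable abbrev pbar : Rmod R π (k + 1) := Ideal.Quotient.mk _ π

/-- The submodule `π^k B` of `B`. -/
noncomputable abbrev pikB : Submodule (Rmod R π (k + 1)) B :=
  (pbar R π k) ^ k • (⊤ : Submodule (Rmod R π (k + 1)) B)

/-- The submodule `π B` of `B`. -/
noncomputable abbrev piB : Submodule (Rmod R π (k + 1)) B :=
  (pbar R π k) • (⊤ : Submodule (Rmod R π (k + 1)) B)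

/-- `L = B/π^k B`, the reduction of `B` to a module over `R_k`. -/
noncomputable abbrev Lred := B ⧸ pikB R π k B

/-- `L̄ = B/πB`, the reduction of `B` to a vector space over the residue field. -/
noncomputable abbrev Lbar := B ⧸ piB R π k B

/-- The reduction map `mod : B → L = B/π^k B`. -/
noncomputable abbrev modk : B →ₗ[Rmod R π (k + 1)] Lred R π k B :=
  (pikB R π k B).mkQ

/-- The reduction map `λ : B → L̄ = B/πB`. -/
noncomputable abbrev lam : B →ₗ[Rmod R π (k + 1)] Lbar R π k B :=
  (piB R π k B).mkQ

/-- `ψ : L̄ → B`, the map sending `x mod πB` to `π^k x`; its (corestriction to `π^k B`)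
is the inverse of the canonical isomorphism `χ : π^k B → L̄`. -/
noncomputable def psi : Lbar R π k B →ₗ[Rmod R π (k + 1)] B :=
  Submodule.liftQ _ ((pbar R π k) ^ k • (LinearMap.id : B →ₗ[Rmod R π (k + 1)] B))
    (by
      intro x hx
      rw [← SetLike.mem_coe, Submodule.coe_pointwise_smul, Set.mem_smul_set] at hx
      obtain ⟨y, -, rfl⟩ := hx
      have h0 : (pbar R π k) ^ k * pbar R π k = 0 := by
        rw [← pow_succ, ← map_pow, Ideal.Quotient.eq_zero_iff_mem]
        exact Ideal.mem_span_singleton_self _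
      simp only [LinearMap.mem_ker, LinearMap.smul_apply, LinearMap.id_apply, smul_smul]
      rw [h0, zero_smul])

@[simp] theorem psi_apply (x : B) :
    psi R π k B (lam R π k B x) = ((pbar R π k) ^ k) • x := rfl

end Setup


/-- If `⟨·,·⟩₂ − ⟨·,·⟩₁ = −dφ` for a linear map (1-cochain) `φ : L̄ → L̄`, then
`Ψ = Id + ψ∘φ∘λ` is an automorphism of the `R_{k+1}`-module `B` with
`[Ψ(x),Ψ(y)]₂ = Ψ([x,y]₁)`; hence `Ψ` is a Lie algebra isomorphism from `(B,[·,·]₁)` to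
`(B,[·,·]₂)` inducing the identity on `L`. -/
theorem stmt_14 (R : Type) [CommRing R] [IsDomain R] [IsDiscreteValuationRing R]
    (π : R) (hπ : Irreducible π) (k : ℕ) (hk : 1 ≤ k)
    (B : Type) [AddCommGroup B] [Module (Rmod R π (k + 1)) B]
    [Module.Free (Rmod R π (k + 1)) B] [Module.Finite (Rmod R π (k + 1)) B]
    (brL : Lred R π k B →ₗ[Rmod R π (k + 1)] Lred R π k B →ₗ[Rmod R π (k + 1)] Lred R π k B)
    (haltL : ∀ v, brL v v = 0)
    (hjacL : ∀ x y z : Lred R π k B, brL (brL x y) z + brL (brL y z) x + brL (brL z x) y = 0)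
    (br0 br1 br2 : B →ₗ[Rmod R π (k + 1)] B →ₗ[Rmod R π (k + 1)] B)
    (halt0 : ∀ v, br0 v v = 0) (halt1 : ∀ v, br1 v v = 0) (halt2 : ∀ v, br2 v v = 0)
    (hjac0 : ∀ x y z : B, br0 (br0 x y) z + br0 (br0 y z) x + br0 (br0 z x) y = 0)
    (hjac1 : ∀ x y z : B, br1 (br1 x y) z + br1 (br1 y z) x + br1 (br1 z x) y = 0)
    (hjac2 : ∀ x y z : B, br2 (br2 x y) z + br2 (br2 y z) x + br2 (br2 z x) y = 0)
    (hlift0 : ∀ x y : B, modk R π k B (br0 x y) = brL (modk R π k B x) (modk R π k B y))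
    (hlift1 : ∀ x y : B, modk R π k B (br1 x y) = brL (modk R π k B x) (modk R π k B y))
    (hlift2 : ∀ x y : B, modk R π k B (br2 x y) = brL (modk R π k B x) (modk R π k B y))
    (brb : Lbar R π k B →ₗ[Rmod R π (k + 1)] Lbar R π k B →ₗ[Rmod R π (k + 1)] Lbar R π k B)
    (hbrb : ∀ x y : B, lam R π k B (br0 x y) = brb (lam R π k B x) (lam R π k B y))
    (form1 form2 : Lbar R π k B →ₗ[Rmod R π (k + 1)] Lbar R π k B →ₗ[Rmod R π (k + 1)]
      Lbar R π k B)
    (hform1alt : ∀ v, form1 v v = 0) (hform2alt : ∀ v, form2 v v = 0)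
    (hbr1 : ∀ x y : B, br1 x y = br0 x y + psi R π k B (form1 (lam R π k B x) (lam R π k B y)))
    (hbr2 : ∀ x y : B, br2 x y = br0 x y + psi R π k B (form2 (lam R π k B x) (lam R π k B y)))
    (φ : Lbar R π k B →ₗ[Rmod R π (k + 1)] Lbar R π k B)
    (hφ : ∀ u v : Lbar R π k B,
      form2 u v - form1 u v = -(-φ (brb u v) + brb u (φ v) - brb v (φ u))) :
    ∃ Ψ : B ≃ₗ[Rmod R π (k + 1)] B,
      (∀ x : B, Ψ x = x + psi R π k B (φ (lam R π k B x))) ∧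
      (∀ x y : B, br2 (Ψ x) (Ψ y) = Ψ (br1 x y)) ∧
      (∀ x : B, modk R π k B (Ψ x) = modk R π k B x) := by
  classical
  set S := Rmod R π (k + 1)
  set N : B →ₗ[S] B := (psi R π k B) ∘ₗ (φ ∘ₗ (lam R π k B)) with hNdef
  have hNapp : ∀ x : B, N x = psi R π k B (φ (lam R π k B x)) := fun x => rfl
  -- π kills L̄
  have hpbar : ∀ w : Lbar R π k B, pbar R π k • w = 0 := by
    intro w
    obtain ⟨z, rfl⟩ := Submodule.mkQ_surjective _ w
    rw [← map_smul, Submodule.mkQ_apply, Submodule.Quotient.mk_eq_zero]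
    exact Submodule.smul_mem_pointwise_smul z _ _ Submodule.mem_top
  have hpbark : ∀ w : Lbar R π k B, (pbar R π k) ^ k • w = 0 := by
    intro w
    have hkk : (pbar R π k) ^ k = (pbar R π k) ^ (k - 1) * pbar R π k := by
      rw [← pow_succ]
      congr 1
      omega
    rw [hkk, mul_smul, hpbar, smul_zero]
  have lam_psi : ∀ w : Lbar R π k B, lam R π k B (psi R π k B w) = 0 := by
    intro w
    obtain ⟨z, rfl⟩ := Submodule.mkQ_surjective (piB R π k B) w
    rw [show (piB R π k B).mkQ z = lam R π k B z from rfl, psi_apply, map_smul, hpbark]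
  have modk_psi : ∀ w : Lbar R π k B, modk R π k B (psi R π k B w) = 0 := by
    intro w
    obtain ⟨z, rfl⟩ := Submodule.mkQ_surjective (piB R π k B) w
    rw [show (piB R π k B).mkQ z = lam R π k B z from rfl, psi_apply, Submodule.mkQ_apply,
      Submodule.Quotient.mk_eq_zero]
    exact Submodule.smul_mem_pointwise_smul z _ _ Submodule.mem_top
  have hpk2 : (pbar R π k) ^ k * (pbar R π k) ^ k = 0 := by
    have h0 : (pbar R π k) ^ (k + 1) = 0 := by
      rw [← map_pow, Ideal.Quotient.eq_zero_iff_mem]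
      exact Ideal.mem_span_singleton_self _
    have hkk : k + k = (k + 1) + (k - 1) := by omega
    rw [← pow_add, hkk, pow_add, h0, zero_mul]
  have hlamN : ∀ x : B, lam R π k B (N x) = 0 := fun x => lam_psi _
  have hN2 : ∀ x : B, N (N x) = 0 := by
    intro x
    rw [hNapp, hlamN, map_zero, map_zero]
  have hinv1 : (LinearMap.id + N) ∘ₗ (LinearMap.id - N) = LinearMap.id := by
    ext x
    simp only [LinearMap.comp_apply, LinearMap.add_apply, LinearMap.sub_apply,
      LinearMap.id_apply, map_sub, hN2, sub_zero]
    abel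
  have hinv2 : (LinearMap.id - N) ∘ₗ (LinearMap.id + N) = LinearMap.id := by
    ext x
    simp only [LinearMap.comp_apply, LinearMap.add_apply, LinearMap.sub_apply,
      LinearMap.id_apply, map_add, hN2, add_zero]
    abel
  refine ⟨LinearEquiv.ofLinear (LinearMap.id + N) (LinearMap.id - N) hinv1 hinv2, ?_, ?_, ?_⟩
  · intro x
    simp only [LinearEquiv.ofLinear_apply, LinearMap.add_apply, LinearMap.id_apply, hNapp]
  · -- the bracket identity
    intro x y
    set u := lam R π k B x with hu
    set v := lam R π k B y with hv
    obtain ⟨x', hx'⟩ := Submodule.mkQ_surjective (piB R π k B) (φ u)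
    obtain ⟨y', hy'⟩ := Submodule.mkQ_surjective (piB R π k B) (φ v)
    have hx'' : lam R π k B x' = φ u := hx'
    have hy'' : lam R π k B y' = φ v := hy'
    have hNx : N x = (pbar R π k) ^ k • x' := by rw [hNapp, ← hx'', psi_apply]
    have hNy : N y = (pbar R π k) ^ k • y' := by rw [hNapp, ← hy'', psi_apply]
    -- antisymmetry of brb
    have hbrbalt : ∀ w : Lbar R π k B, brb w w = 0 := by
      intro w
      obtain ⟨z, rfl⟩ := Submodule.mkQ_surjective (piB R π k B) w
      rw [show (piB R π k B).mkQ z = lam R π k B z from rfl, ← hbrb, halt0, map_zero]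
    have hbrbneg : ∀ a b : Lbar R π k B, brb a b = -brb b a := by
      intro a b
      have h := hbrbalt (a + b)
      simp only [map_add, LinearMap.add_apply, hbrbalt, zero_add, add_zero] at h
      exact eq_neg_of_add_eq_zero_right h
    -- term computations
    have t1 : br2 x (N y) = psi R π k B (brb u (φ v)) := by
      rw [hbr2, hlamN, map_zero, map_zero, add_zero, hNy, map_smul, ← psi_apply, hbrb, hy'']
    have t2 : br2 (N x) y = psi R π k B (brb (φ u) v) := by
      rw [hbr2, hlamN, LinearMap.map_zero₂, map_zero, add_zero, hNx, LinearMap.map_smul₂,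
        ← psi_apply, hbrb, hx'']
    have t3 : br2 (N x) (N y) = 0 := by
      rw [hbr2]
      simp only [hlamN, map_zero, LinearMap.zero_apply, add_zero]
      rw [hNx, hNy, LinearMap.map_smul₂, map_smul, smul_smul, hpk2, zero_smul]
    have expand : br2 (x + N x) (y + N y)
        = br2 x y + br2 x (N y) + br2 (N x) y + br2 (N x) (N y) := by
      simp only [map_add, LinearMap.add_apply]
      abel
    have t_all : br2 (x + N x) (y + N y)
        = br0 x y + psi R π k B (form2 u v + brb u (φ v) + brb (φ u) v) := by
      rw [expand, t1, t2, t3, add_zero, hbr2 x y]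
      simp only [map_add]
      abel
    have r1 : lam R π k B (br1 x y) = brb u v := by
      rw [hbr1, map_add, lam_psi, add_zero, hbrb]
    have rhs_all : br1 x y + N (br1 x y)
        = br0 x y + psi R π k B (form1 u v + φ (brb u v)) := by
      rw [hNapp, r1, hbr1 x y]
      simp only [map_add]
      abel
    have key : form2 u v + brb u (φ v) + brb (φ u) v = form1 u v + φ (brb u v) := by
      have h := hφ u v
      rw [sub_eq_iff_eq_add] at h
      rw [h, hbrbneg (φ u) v]
      abel
    show br2 (x + N x) (y + N y) = br1 x y + N (br1 x y)
    rw [t_all, rhs_all, key]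
  · intro x
    show modk R π k B (x + N x) = modk R π k B x
    rw [map_add, hNapp, modk_psi, add_zero]
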